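/- (Forward invariance of the final stage condition for matrix completion.) Consider curves a_i : ℝ → ℝ^m (i = 1,…,n), B : ℝ → ℝ^{m×m}, c_i : ℝ → ℝ^m and nonzero constants λ_i satisfying a_i' = λ_i B c_i, B' = Σ_i λ_i a_i c_i^T, c_i' = λ_i B^T a_i, on a maximal interval [0, T*). Suppose at some t₀ < T*: (1) λ_i c_{i,j} ⟨a_i, b^j⟩ > 0 and λ_i a_{i,j} ⟨b_j, c_i⟩ > 0 for all i, j; (2) ⟨c_{i,k} b^k, c_{i,j} b^j⟩ > 0 and ⟨a_{i,k} b_k, a_{i,j} b_j⟩ > 0 for all i, j, k; (3) λ_i λ_j a_{i,k} a_{j,k} c_{i,l} c_{j,l} > 0 for all i, j, k, l. Then all these inequalities hold for all t ∈ (t₀, T*). -/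

import Mathlib

private abbrev MCIdx (n m : ℕ) :=
  (Fin n × Fin m) ⊕ (Fin n × Fin m) ⊕ (Fin n × Fin m × Fin m) ⊕
    (Fin n × Fin m × Fin m) ⊕ (Fin n × Fin n × Fin m × Fin m)

private def MCQ {n m : ℕ} (a c : Fin n → ℝ → Fin m → ℝ) (B : ℝ → Fin m → Fin m → ℝ)
    (lam : Fin n → ℝ) : MCIdx n m → ℝ → ℝ
  | .inl (i, j), t => lam i * c i t j * ∑ k, a i t k * B t k j
  | .inr (.inl (i, j)), t => lam i * a i t j * ∑ k, B t j k * c i t k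
  | .inr (.inr (.inl (i, j, k))), t => ∑ l, (c i t k * B t l k) * (c i t j * B t l j)
  | .inr (.inr (.inr (.inl (i, j, k)))), t => ∑ l, (a i t k * B t k l) * (a i t j * B t j l)
  | .inr (.inr (.inr (.inr (i, j, k, l)))), t =>
      lam i * lam j * a i t k * a j t k * c i t l * c j t l

private lemma mc_sign1 {n m : ℕ} (A C : Fin n → Fin m → ℝ) (Bm : Fin m → Fin m → ℝ)
    (lam : Fin n → ℝ) (i : Fin n) (j : Fin m)
    (hQ2 : ∀ l : Fin m, 0 < ∑ k, (C i l * Bm k l) * (C i j * Bm k j))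
    (hQ3 : ∀ (p : Fin n) (k : Fin m), 0 < lam i * lam p * A i k * A p k * C i j * C p j) :
    0 ≤ lam i * (lam i * ∑ k, Bm k j * A i k) * (∑ k, A i k * Bm k j)
      + lam i * C i j * (∑ k, ((lam i * ∑ l, Bm k l * C i l) * Bm k j
          + A i k * (∑ p, lam p * A p k * C p j))) := by
  have e1 : (∑ k, Bm k j * A i k) = ∑ k, A i k * Bm k j :=
    Finset.sum_congr rfl fun k _ => mul_comm _ _
  have e2 : lam i * C i j * (∑ k, ((lam i * ∑ l, Bm k l * C i l) * Bm k j
          + A i k * (∑ p, lam p * A p k * C p j)))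
      = (∑ l, lam i ^ 2 * ∑ k, (C i l * Bm k l) * (C i j * Bm k j))
        + ∑ k, ∑ p, lam i * lam p * A i k * A p k * C i j * C p j := by
    rw [Finset.sum_add_distrib, mul_add]
    congr 1
    · simp only [Finset.mul_sum, Finset.sum_mul]
      rw [Finset.sum_comm]
      exact Finset.sum_congr rfl fun l _ => Finset.sum_congr rfl fun k _ => by ring
    · simp only [Finset.mul_sum]
      exact Finset.sum_congr rfl fun k _ => Finset.sum_congr rfl fun p _ => by ring
  rw [e1, e2, ← mul_assoc]
  have e3 : lam i * lam i * (∑ k, A i k * Bm k j) * (∑ k, A i k * Bm k j)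
      = (lam i * ∑ k, A i k * Bm k j) ^ 2 := by ring
  rw [e3]
  have h2 : 0 ≤ ∑ l, lam i ^ 2 * ∑ k, (C i l * Bm k l) * (C i j * Bm k j) :=
    Finset.sum_nonneg fun l _ => mul_nonneg (sq_nonneg _) (hQ2 l).le
  have h3 : 0 ≤ ∑ k, ∑ p, lam i * lam p * A i k * A p k * C i j * C p j :=
    Finset.sum_nonneg fun k _ => Finset.sum_nonneg fun p _ => (hQ3 p k).le
  nlinarith [sq_nonneg (lam i * ∑ k, A i k * Bm k j)]

private lemma mc_sign1' {n m : ℕ} (A C : Fin n → Fin m → ℝ) (Bm : Fin m → Fin m → ℝ)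
    (lam : Fin n → ℝ) (i : Fin n) (j : Fin m)
    (hQ2b : ∀ l : Fin m, 0 < ∑ k, (A i l * Bm l k) * (A i j * Bm j k))
    (hQ3 : ∀ (p : Fin n) (k : Fin m), 0 < lam i * lam p * A i j * A p j * C i k * C p k) :
    0 ≤ lam i * (lam i * ∑ l, Bm j l * C i l) * (∑ k, Bm j k * C i k)
      + lam i * A i j * (∑ k, ((∑ p, lam p * A p j * C p k) * C i k
          + Bm j k * (lam i * ∑ l, Bm l k * A i l))) := by
  have e2 : lam i * A i j * (∑ k, ((∑ p, lam p * A p j * C p k) * C i k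
          + Bm j k * (lam i * ∑ l, Bm l k * A i l)))
      = (∑ k, ∑ p, lam i * lam p * A i j * A p j * C i k * C p k)
        + ∑ l, lam i ^ 2 * ∑ k, (A i l * Bm l k) * (A i j * Bm j k) := by
    rw [Finset.sum_add_distrib, mul_add]
    congr 1
    · simp only [Finset.mul_sum, Finset.sum_mul]
      exact Finset.sum_congr rfl fun k _ => Finset.sum_congr rfl fun p _ => by ring
    · simp only [Finset.mul_sum, Finset.sum_mul]
      rw [Finset.sum_comm]
      exact Finset.sum_congr rfl fun l _ => Finset.sum_congr rfl fun k _ => by ring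
  rw [e2, ← mul_assoc]
  have e3 : lam i * lam i * (∑ l, Bm j l * C i l) * (∑ k, Bm j k * C i k)
      = (lam i * ∑ k, Bm j k * C i k) ^ 2 := by ring
  rw [e3]
  have h2 : 0 ≤ ∑ l, lam i ^ 2 * ∑ k, (A i l * Bm l k) * (A i j * Bm j k) :=
    Finset.sum_nonneg fun l _ => mul_nonneg (sq_nonneg _) (hQ2b l).le
  have h3 : 0 ≤ ∑ k, ∑ p, lam i * lam p * A i j * A p j * C i k * C p k :=
    Finset.sum_nonneg fun k _ => Finset.sum_nonneg fun p _ => (hQ3 p k).le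
  nlinarith [sq_nonneg (lam i * ∑ k, Bm j k * C i k)]

private lemma mc_sign2 {n m : ℕ} (A C : Fin n → Fin m → ℝ) (Bm : Fin m → Fin m → ℝ)
    (lam : Fin n → ℝ) (i : Fin n) (j k : Fin m)
    (hQ1 : ∀ (p : Fin n) (q : Fin m), 0 < lam p * C p q * ∑ l, A p l * Bm l q)
    (hQ2 : 0 < ∑ l, (C i k * Bm l k) * (C i j * Bm l j))
    (hQ3 : ∀ (p : Fin n) (q r : Fin m), 0 < lam i * lam p * A i q * A p q * C i r * C p r) :
    0 ≤ ∑ l, (((lam i * ∑ q, Bm q k * A i q) * Bm l k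
            + C i k * (∑ p, lam p * A p l * C p k)) * (C i j * Bm l j)
        + (C i k * Bm l k) * ((lam i * ∑ q, Bm q j * A i q) * Bm l j
            + C i j * (∑ p, lam p * A p l * C p j))) := by
  have split : (∑ l, (((lam i * ∑ q, Bm q k * A i q) * Bm l k
            + C i k * (∑ p, lam p * A p l * C p k)) * (C i j * Bm l j)
        + (C i k * Bm l k) * ((lam i * ∑ q, Bm q j * A i q) * Bm l j
            + C i j * (∑ p, lam p * A p l * C p j))))
      = (lam i * (∑ q, A i q * Bm q k) * C i j) * (∑ l, Bm l k * Bm l j)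
        + (∑ p, (lam p * C p k * C i k * C i j) * ∑ l, A p l * Bm l j)
        + (lam i * (∑ q, A i q * Bm q j) * C i k) * (∑ l, Bm l k * Bm l j)
        + (∑ p, (lam p * C p j * C i k * C i j) * ∑ l, A p l * Bm l k) := by
    simp only [Finset.mul_sum, Finset.sum_mul, mul_add, add_mul, Finset.sum_add_distrib]
    have hA : ∑ x : Fin m, ∑ q : Fin m, lam i * (Bm q k * A i q) * Bm x k * (C i j * Bm x j)
        = ∑ x : Fin m, ∑ q : Fin m, lam i * (A i q * Bm q k) * C i j * (Bm x k * Bm x j) :=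
      Finset.sum_congr rfl fun x _ => Finset.sum_congr rfl fun q _ => by ring
    have hB : ∑ x : Fin m, ∑ p : Fin n, C i k * (lam p * A p x * C p k) * (C i j * Bm x j)
        = ∑ p : Fin n, ∑ x : Fin m, lam p * C p k * C i k * C i j * (A p x * Bm x j) := by
      rw [Finset.sum_comm]
      exact Finset.sum_congr rfl fun p _ => Finset.sum_congr rfl fun x _ => by ring
    have hC : ∑ x : Fin m, ∑ q : Fin m, C i k * Bm x k * (lam i * (Bm q j * A i q) * Bm x j)
        = ∑ x : Fin m, ∑ q : Fin m, lam i * (A i q * Bm q j) * C i k * (Bm x k * Bm x j) :=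
      Finset.sum_congr rfl fun x _ => Finset.sum_congr rfl fun q _ => by ring
    have hD : ∑ x : Fin m, ∑ p : Fin n, C i k * Bm x k * (C i j * (lam p * A p x * C p j))
        = ∑ p : Fin n, ∑ x : Fin m, lam p * C p j * C i k * C i j * (A p x * Bm x k) := by
      rw [Finset.sum_comm]
      exact Finset.sum_congr rfl fun p _ => Finset.sum_congr rfl fun x _ => by ring
    linarith [hA, hB, hC, hD]
  rw [split]
  have hq2f : 0 < C i k * C i j * ∑ l, Bm l k * Bm l j := by
    have h : (∑ l, (C i k * Bm l k) * (C i j * Bm l j))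
        = C i k * C i j * ∑ l, Bm l k * Bm l j := by
      rw [Finset.mul_sum]
      exact Finset.sum_congr rfl fun l _ => by ring
    rw [← h]; exact hQ2
  have prod4 : ∀ p : Fin n, 0 < C i k * C p k * (C i j * C p j) := by
    intro p
    nlinarith [mul_pos (hQ3 p k k) (hQ3 p k j), sq_nonneg (lam i * lam p * A i k * A p k)]
  have T1 : 0 ≤ lam i * (∑ q, A i q * Bm q k) * C i j * (∑ l, Bm l k * Bm l j) := by
    nlinarith [mul_pos (hQ1 i k) hq2f, sq_nonneg (C i k)]
  have T3 : 0 ≤ lam i * (∑ q, A i q * Bm q j) * C i k * (∑ l, Bm l k * Bm l j) := by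
    nlinarith [mul_pos (hQ1 i j) hq2f, sq_nonneg (C i j)]
  have T2 : 0 ≤ ∑ p, (lam p * C p k * C i k * C i j) * ∑ l, A p l * Bm l j := by
    refine Finset.sum_nonneg fun p _ => ?_
    nlinarith [mul_pos (hQ1 p j) (prod4 p), sq_nonneg (C p j)]
  have T4 : 0 ≤ ∑ p, (lam p * C p j * C i k * C i j) * ∑ l, A p l * Bm l k := by
    refine Finset.sum_nonneg fun p _ => ?_
    nlinarith [mul_pos (hQ1 p k) (prod4 p), sq_nonneg (C p k)]
  linarith

private lemma mc_sign2' {n m : ℕ} (A C : Fin n → Fin m → ℝ) (Bm : Fin m → Fin m → ℝ)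
    (lam : Fin n → ℝ) (i : Fin n) (j k : Fin m)
    (hQ1b : ∀ (p : Fin n) (q : Fin m), 0 < lam p * A p q * ∑ l, Bm q l * C p l)
    (hQ2b : 0 < ∑ l, (A i k * Bm k l) * (A i j * Bm j l))
    (hQ3 : ∀ (p : Fin n) (q r : Fin m), 0 < lam i * lam p * A i q * A p q * C i r * C p r) :
    0 ≤ ∑ l, (((lam i * ∑ q, Bm k q * C i q) * Bm k l
            + A i k * (∑ p, lam p * A p k * C p l)) * (A i j * Bm j l)
        + (A i k * Bm k l) * ((lam i * ∑ q, Bm j q * C i q) * Bm j l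
            + A i j * (∑ p, lam p * A p j * C p l))) := by
  have split : (∑ l, (((lam i * ∑ q, Bm k q * C i q) * Bm k l
            + A i k * (∑ p, lam p * A p k * C p l)) * (A i j * Bm j l)
        + (A i k * Bm k l) * ((lam i * ∑ q, Bm j q * C i q) * Bm j l
            + A i j * (∑ p, lam p * A p j * C p l))))
      = (lam i * (∑ q, Bm k q * C i q) * A i j) * (∑ l, Bm k l * Bm j l)
        + (∑ p, (lam p * A p k * A i k * A i j) * ∑ l, Bm j l * C p l)
        + (lam i * (∑ q, Bm j q * C i q) * A i k) * (∑ l, Bm k l * Bm j l)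
        + (∑ p, (lam p * A p j * A i k * A i j) * ∑ l, Bm k l * C p l) := by
    simp only [Finset.mul_sum, Finset.sum_mul, mul_add, add_mul, Finset.sum_add_distrib]
    have hA : ∑ x : Fin m, ∑ q : Fin m, lam i * (Bm k q * C i q) * Bm k x * (A i j * Bm j x)
        = ∑ x : Fin m, ∑ q : Fin m, lam i * (Bm k q * C i q) * A i j * (Bm k x * Bm j x) :=
      Finset.sum_congr rfl fun x _ => Finset.sum_congr rfl fun q _ => by ring
    have hB : ∑ x : Fin m, ∑ p : Fin n, A i k * (lam p * A p k * C p x) * (A i j * Bm j x)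
        = ∑ p : Fin n, ∑ x : Fin m, lam p * A p k * A i k * A i j * (Bm j x * C p x) := by
      rw [Finset.sum_comm]
      exact Finset.sum_congr rfl fun p _ => Finset.sum_congr rfl fun x _ => by ring
    have hC : ∑ x : Fin m, ∑ q : Fin m, A i k * Bm k x * (lam i * (Bm j q * C i q) * Bm j x)
        = ∑ x : Fin m, ∑ q : Fin m, lam i * (Bm j q * C i q) * A i k * (Bm k x * Bm j x) :=
      Finset.sum_congr rfl fun x _ => Finset.sum_congr rfl fun q _ => by ring
    have hD : ∑ x : Fin m, ∑ p : Fin n, A i k * Bm k x * (A i j * (lam p * A p j * C p x))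
        = ∑ p : Fin n, ∑ x : Fin m, lam p * A p j * A i k * A i j * (Bm k x * C p x) := by
      rw [Finset.sum_comm]
      exact Finset.sum_congr rfl fun p _ => Finset.sum_congr rfl fun x _ => by ring
    linarith [hA, hB, hC, hD]
  rw [split]
  have hq2f : 0 < A i k * A i j * ∑ l, Bm k l * Bm j l := by
    have h : (∑ l, (A i k * Bm k l) * (A i j * Bm j l))
        = A i k * A i j * ∑ l, Bm k l * Bm j l := by
      rw [Finset.mul_sum]
      exact Finset.sum_congr rfl fun l _ => by ring
    rw [← h]; exact hQ2b
  have prod4 : ∀ p : Fin n, 0 < A i k * A p k * (A i j * A p j) := by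
    intro p
    nlinarith [mul_pos (hQ3 p k j) (hQ3 p j j), sq_nonneg (lam i * lam p * C i j * C p j)]
  have T1 : 0 ≤ lam i * (∑ q, Bm k q * C i q) * A i j * (∑ l, Bm k l * Bm j l) := by
    nlinarith [mul_pos (hQ1b i k) hq2f, sq_nonneg (A i k)]
  have T3 : 0 ≤ lam i * (∑ q, Bm j q * C i q) * A i k * (∑ l, Bm k l * Bm j l) := by
    nlinarith [mul_pos (hQ1b i j) hq2f, sq_nonneg (A i j)]
  have T2 : 0 ≤ ∑ p, (lam p * A p k * A i k * A i j) * ∑ l, Bm j l * C p l := by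
    refine Finset.sum_nonneg fun p _ => ?_
    nlinarith [mul_pos (hQ1b p j) (prod4 p), sq_nonneg (A p j)]
  have T4 : 0 ≤ ∑ p, (lam p * A p j * A i k * A i j) * ∑ l, Bm k l * C p l := by
    refine Finset.sum_nonneg fun p _ => ?_
    nlinarith [mul_pos (hQ1b p k) (prod4 p), sq_nonneg (A p k)]
  linarith

private lemma mc_sign3 {n m : ℕ} (A C : Fin n → Fin m → ℝ) (Bm : Fin m → Fin m → ℝ)
    (lam : Fin n → ℝ) (i j : Fin n) (k l : Fin m)
    (hQ1 : ∀ (p : Fin n) (q : Fin m), 0 < lam p * C p q * ∑ r, A p r * Bm r q)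
    (hQ1b : ∀ (p : Fin n) (q : Fin m), 0 < lam p * A p q * ∑ r, Bm q r * C p r)
    (hQ3 : 0 < lam i * lam j * A i k * A j k * C i l * C j l) :
    0 ≤ (((lam i * lam j * (lam i * ∑ q, Bm k q * C i q)) * A j k
          + (lam i * lam j * A i k) * (lam j * ∑ q, Bm k q * C j q)) * C i l
        + (lam i * lam j * A i k * A j k) * (lam i * ∑ q, Bm q l * A i q)) * C j l
      + (lam i * lam j * A i k * A j k * C i l) * (lam j * ∑ q, Bm q l * A j q) := by
  have ei : (∑ q, Bm q l * A i q) = ∑ q, A i q * Bm q l :=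
    Finset.sum_congr rfl fun q _ => mul_comm _ _
  have ej : (∑ q, Bm q l * A j q) = ∑ q, A j q * Bm q l :=
    Finset.sum_congr rfl fun q _ => mul_comm _ _
  rw [ei, ej]
  have t1 : 0 ≤ lam i * lam j * (lam i * ∑ q, Bm k q * C i q) * A j k * C i l * C j l := by
    nlinarith [mul_pos (hQ1b i k) hQ3, sq_nonneg (A i k)]
  have t2 : 0 ≤ lam i * lam j * A i k * (lam j * ∑ q, Bm k q * C j q) * C i l * C j l := by
    nlinarith [mul_pos (hQ1b j k) hQ3, sq_nonneg (A j k)]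
  have t3 : 0 ≤ lam i * lam j * A i k * A j k * (lam i * ∑ q, A i q * Bm q l) * C j l := by
    nlinarith [mul_pos (hQ1 i l) hQ3, sq_nonneg (C i l)]
  have t4 : 0 ≤ lam i * lam j * A i k * A j k * C i l * (lam j * ∑ q, A j q * Bm q l) := by
    nlinarith [mul_pos (hQ1 j l) hQ3, sq_nonneg (C j l)]
  nlinarith [t1, t2, t3, t4]

private lemma MCkey {n m : ℕ} {Tstar : ℝ} {a c : Fin n → ℝ → Fin m → ℝ}
    {B : ℝ → Fin m → Fin m → ℝ} {lam : Fin n → ℝ}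
    (ha : ∀ t ∈ Set.Ico (0:ℝ) Tstar, ∀ (i : Fin n) (k : Fin m),
      HasDerivAt (fun s => a i s k) (lam i * ∑ j, B t k j * c i t j) t)
    (hB : ∀ t ∈ Set.Ico (0:ℝ) Tstar, ∀ (k l : Fin m),
      HasDerivAt (fun s => B s k l) (∑ i, lam i * a i t k * c i t l) t)
    (hc : ∀ t ∈ Set.Ico (0:ℝ) Tstar, ∀ (i : Fin n) (j : Fin m),
      HasDerivAt (fun s => c i s j) (lam i * ∑ k, B t k j * a i t k) t)
    {t : ℝ} (ht : t ∈ Set.Ico (0:ℝ) Tstar) (p : MCIdx n m) :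
    ∃ d, HasDerivAt (fun s => MCQ a c B lam p s) d t ∧
      ((∀ q, 0 < MCQ a c B lam q t) → 0 ≤ d) := by
  rcases p with ⟨i, j⟩ | ⟨i, j⟩ | ⟨i, j, k⟩ | ⟨i, j, k⟩ | ⟨i, j, k, l⟩
  · refine ⟨_, ((hc t ht i j).const_mul (lam i)).mul
      (HasDerivAt.fun_sum fun k _ => (ha t ht i k).mul (hB t ht k j)), fun hpos => ?_⟩
    exact mc_sign1 (fun p q => a p t q) (fun p q => c p t q) (B t) lam i j
      (fun l => hpos (.inr (.inr (.inl (i, j, l)))))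
      (fun p k => hpos (.inr (.inr (.inr (.inr (i, p, k, j))))))
  · refine ⟨_, ((ha t ht i j).const_mul (lam i)).mul
      (HasDerivAt.fun_sum fun k _ => (hB t ht j k).mul (hc t ht i k)), fun hpos => ?_⟩
    exact mc_sign1' (fun p q => a p t q) (fun p q => c p t q) (B t) lam i j
      (fun l => hpos (.inr (.inr (.inr (.inl (i, j, l))))))
      (fun p k => hpos (.inr (.inr (.inr (.inr (i, p, j, k))))))
  · refine ⟨_, HasDerivAt.fun_sum fun l _ =>
      ((hc t ht i k).mul (hB t ht l k)).mul ((hc t ht i j).mul (hB t ht l j)), fun hpos => ?_⟩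
    exact mc_sign2 (fun p q => a p t q) (fun p q => c p t q) (B t) lam i j k
      (fun p q => hpos (.inl (p, q)))
      (hpos (.inr (.inr (.inl (i, j, k)))))
      (fun p q r => hpos (.inr (.inr (.inr (.inr (i, p, q, r))))))
  · refine ⟨_, HasDerivAt.fun_sum fun l _ =>
      ((ha t ht i k).mul (hB t ht k l)).mul ((ha t ht i j).mul (hB t ht j l)), fun hpos => ?_⟩
    exact mc_sign2' (fun p q => a p t q) (fun p q => c p t q) (B t) lam i j k
      (fun p q => hpos (.inr (.inl (p, q))))
      (hpos (.inr (.inr (.inr (.inl (i, j, k))))))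
      (fun p q r => hpos (.inr (.inr (.inr (.inr (i, p, q, r))))))
  · refine ⟨_, ((((ha t ht i k).const_mul (lam i * lam j)).mul (ha t ht j k)).mul
      (hc t ht i l)).mul (hc t ht j l), fun hpos => ?_⟩
    exact mc_sign3 (fun p q => a p t q) (fun p q => c p t q) (B t) lam i j k l
      (fun p q => hpos (.inl (p, q)))
      (fun p q => hpos (.inr (.inl (p, q))))
      (hpos (.inr (.inr (.inr (.inr (i, j, k, l))))))

/-- Forward invariance of the final stage condition for matrix completion. -/
theorem stmt_16 (n m : ℕ) (Tstar : ℝ) (a c : Fin n → ℝ → Fin m → ℝ)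
    (B : ℝ → Fin m → Fin m → ℝ) (lam : Fin n → ℝ) (hlam : ∀ i, lam i ≠ 0)
    (ha : ∀ t ∈ Set.Ico (0:ℝ) Tstar, ∀ (i : Fin n) (k : Fin m),
      HasDerivAt (fun s => a i s k) (lam i * ∑ j, B t k j * c i t j) t)
    (hB : ∀ t ∈ Set.Ico (0:ℝ) Tstar, ∀ (k l : Fin m),
      HasDerivAt (fun s => B s k l) (∑ i, lam i * a i t k * c i t l) t)
    (hc : ∀ t ∈ Set.Ico (0:ℝ) Tstar, ∀ (i : Fin n) (j : Fin m),
      HasDerivAt (fun s => c i s j) (lam i * ∑ k, B t k j * a i t k) t)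
    (t₀ : ℝ) (ht₀ : t₀ ∈ Set.Ico (0:ℝ) Tstar)
    (h1 : ∀ (i : Fin n) (j : Fin m),
      0 < lam i * c i t₀ j * ∑ k, a i t₀ k * B t₀ k j)
    (h1' : ∀ (i : Fin n) (j : Fin m),
      0 < lam i * a i t₀ j * ∑ k, B t₀ j k * c i t₀ k)
    (h2 : ∀ (i : Fin n) (j k : Fin m),
      0 < ∑ l, (c i t₀ k * B t₀ l k) * (c i t₀ j * B t₀ l j))
    (h2' : ∀ (i : Fin n) (j k : Fin m),
      0 < ∑ l, (a i t₀ k * B t₀ k l) * (a i t₀ j * B t₀ j l))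
    (h3 : ∀ (i j : Fin n) (k l : Fin m),
      0 < lam i * lam j * a i t₀ k * a j t₀ k * c i t₀ l * c j t₀ l) :
    ∀ t ∈ Set.Ioo t₀ Tstar,
      (∀ (i : Fin n) (j : Fin m), 0 < lam i * c i t j * ∑ k, a i t k * B t k j) ∧
      (∀ (i : Fin n) (j : Fin m), 0 < lam i * a i t j * ∑ k, B t j k * c i t k) ∧
      (∀ (i : Fin n) (j k : Fin m),
        0 < ∑ l, (c i t k * B t l k) * (c i t j * B t l j)) ∧
      (∀ (i : Fin n) (j k : Fin m),
        0 < ∑ l, (a i t k * B t k l) * (a i t j * B t j l)) ∧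
      (∀ (i j : Fin n) (k l : Fin m),
        0 < lam i * lam j * a i t k * a j t k * c i t l * c j t l) := by
  intro t₁ ht₁
  have hsub : Set.Icc t₀ t₁ ⊆ Set.Ico (0:ℝ) Tstar :=
    fun s hs => ⟨le_trans ht₀.1 hs.1, lt_of_le_of_lt hs.2 ht₁.2⟩
  have ht₀le : t₀ ≤ t₁ := ht₁.1.le
  have hQt₀ : ∀ p, 0 < MCQ a c B lam p t₀ := by
    rintro (⟨i, j⟩ | ⟨i, j⟩ | ⟨i, j, k⟩ | ⟨i, j, k⟩ | ⟨i, j, k, l⟩)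
    exacts [h1 i j, h1' i j, h2 i j k, h2' i j k, h3 i j k l]
  suffices hall : ∀ p, 0 < MCQ a c B lam p t₁ by
    exact ⟨fun i j => hall (.inl (i, j)), fun i j => hall (.inr (.inl (i, j))),
      fun i j k => hall (.inr (.inr (.inl (i, j, k)))),
      fun i j k => hall (.inr (.inr (.inr (.inl (i, j, k))))),
      fun i j k l => hall (.inr (.inr (.inr (.inr (i, j, k, l)))))⟩
  by_contra hno
  push_neg at hno
  obtain ⟨p₁, hp₁⟩ := hno
  have hkey : ∀ s ∈ Set.Icc t₀ t₁, ∀ p, ∃ d,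
      HasDerivAt (fun u => MCQ a c B lam p u) d s ∧
        ((∀ q, 0 < MCQ a c B lam q s) → 0 ≤ d) :=
    fun s hs p => MCkey ha hB hc (hsub hs) p
  have hcont : ∀ p, ContinuousOn (fun u => MCQ a c B lam p u) (Set.Icc t₀ t₁) :=
    fun p s hs => ((hkey s hs p).choose_spec.1.continuousAt).continuousWithinAt
  set E : Set ℝ := {s | s ∈ Set.Icc t₀ t₁ ∧ ∃ p, MCQ a c B lam p s ≤ 0} with hE
  have hEne : E.Nonempty := ⟨t₁, ⟨ht₀le, le_refl _⟩, p₁, hp₁⟩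
  have hEbdd : BddBelow E := ⟨t₀, fun s hs => hs.1.1⟩
  have hEclosed : IsClosed E := by
    have hEeq : E = ⋃ p : MCIdx n m,
        (Set.Icc t₀ t₁ ∩ (fun u => MCQ a c B lam p u) ⁻¹' Set.Iic 0) := by
      ext s
      constructor
      · rintro ⟨hs, p, hp⟩
        exact Set.mem_iUnion.2 ⟨p, hs, hp⟩
      · intro hs
        obtain ⟨p, hmem, hle⟩ := Set.mem_iUnion.1 hs
        exact ⟨hmem, p, hle⟩
    rw [hEeq]
    exact isClosed_iUnion_of_finite fun p =>
      (hcont p).preimage_isClosed_of_isClosed isClosed_Icc isClosed_Iic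
  set τ := sInf E with hτ
  have hτE : τ ∈ E := hEclosed.csInf_mem hEne hEbdd
  obtain ⟨hτmem, p₀, hp₀⟩ := hτE
  have hbefore : ∀ s ∈ Set.Ico t₀ τ, ∀ p, 0 < MCQ a c B lam p s := by
    intro s hs p
    by_contra h
    push_neg at h
    have hsmem : s ∈ E := ⟨⟨hs.1, le_trans hs.2.le hτmem.2⟩, p, h⟩
    exact absurd (csInf_le hEbdd hsmem) (not_le.2 hs.2)
  have hIccsub : Set.Icc t₀ τ ⊆ Set.Icc t₀ t₁ := Set.Icc_subset_Icc_right hτmem.2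
  have hmono : ∀ p, MonotoneOn (fun u => MCQ a c B lam p u) (Set.Icc t₀ τ) := by
    intro p
    refine monotoneOn_of_deriv_nonneg (convex_Icc _ _) ((hcont p).mono hIccsub) ?_ ?_
    · intro x hx
      rw [interior_Icc] at hx
      have hx' : x ∈ Set.Icc t₀ t₁ := hIccsub ⟨hx.1.le, hx.2.le⟩
      exact ((hkey x hx' p).choose_spec.1.differentiableAt).differentiableWithinAt
    · intro x hx
      rw [interior_Icc] at hx
      have hx' : x ∈ Set.Icc t₀ t₁ := hIccsub ⟨hx.1.le, hx.2.le⟩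
      obtain ⟨d, hd, hsign⟩ := hkey x hx' p
      rw [hd.deriv]
      exact hsign (hbefore x ⟨hx.1.le, hx.2⟩ )
  have hfin : 0 < MCQ a c B lam p₀ τ :=
    lt_of_lt_of_le (hQt₀ p₀)
      (hmono p₀ ⟨le_refl t₀, hτmem.1⟩ ⟨hτmem.1, le_refl τ⟩ hτmem.1)
  exact absurd hp₀ (not_le.2 hfin)
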